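/- Let X = Q₁ ∪ Q₂ where Q₁, Q₂ are Hilbert cubes meeting in exactly one point p, and let 𝒦 = {{x₁,x₂} ∈ F_2(X) : x₁ ∈ Q₁, x₂ ∈ Q₂}. Then the map f : Q₁ × Q₂ → 𝒦 given by f(x₁,x₂) = {x₁,x₂} is a homeomorphism; in particular 𝒦 is homeomorphic to the Hilbert cube. -/

import Mathlib

open Metric TopologicalSpace Set Filter unitInterval

/-- The n-th symmetric product: nonempty subsets with at most n points,
as a subspace of the nonempty compact subsets with the Hausdorff metric. -/
abbrev SymProd (X : Type*) [MetricSpace X] (n : ℕ) :=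
  {A : NonemptyCompacts X // (A : Set X).Finite ∧ (A : Set X).ncard ≤ n}

/-- A Z-set in a metric space. -/
def IsZSet {Y : Type*} [MetricSpace Y] (A : Set Y) : Prop :=
  IsClosed A ∧ ∀ ε > 0, ∃ f : Y → Y, Continuous f ∧ (∀ y, f y ∉ A) ∧ ∀ y, dist y (f y) < ε

/-- A Z-map: a continuous map whose image is a Z-set. -/
def IsZMap {X Y : Type*} [MetricSpace X] [MetricSpace Y] (f : X → Y) : Prop :=
  Continuous f ∧ IsZSet (Set.range f)

/-- The pair {x, y} as a nonempty compact set. -/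
def pairNC {X : Type*} [MetricSpace X] (x y : X) : NonemptyCompacts X :=
  ⟨⟨{x, y}, (isCompact_singleton.insert x)⟩, ⟨x, by simp⟩⟩

lemma pairNC_coe {X : Type*} [MetricSpace X] (x y : X) : (pairNC x y : Set X) = {x, y} := rfl

lemma dist_pairNC_le {X : Type*} [MetricSpace X] (x y x' y' : X) :
    dist (pairNC x y) (pairNC x' y') ≤ max (dist x x') (dist y y') := by
  rw [NonemptyCompacts.dist_eq]
  apply Metric.hausdorffDist_le_of_mem_dist (le_max_of_le_left dist_nonneg)
  · rintro z hz
    rcases hz with rfl | rfl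
    · exact ⟨x', by simp [pairNC_coe], le_max_left _ _⟩
    · exact ⟨y', by simp [pairNC_coe], le_max_right _ _⟩
  · rintro z hz
    rcases hz with rfl | rfl
    · exact ⟨x, by simp [pairNC_coe], by rw [dist_comm]; exact le_max_left _ _⟩
    · exact ⟨y, by simp [pairNC_coe], by rw [dist_comm]; exact le_max_right _ _⟩

/-- (ℕ → I) × (ℕ → I) is homeomorphic to ℕ → I -/
noncomputable def hilbertProd : ((ℕ → I) × (ℕ → I)) ≃ₜ (ℕ → I) :=
  (Homeomorph.sumArrowHomeomorphProdArrow).symm.trans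
    (Homeomorph.piCongrLeft (Y := fun _ ↦ I) Equiv.natSumNatEquivNat)

lemma pair_eq_pair {X : Type*} [MetricSpace X] {Q₁ Q₂ : Set X} {p : X}
    (hinter : Q₁ ∩ Q₂ = {p}) {x₁ y₁ x₂ y₂ : X}
    (hx₁ : x₁ ∈ Q₁) (hy₁ : y₁ ∈ Q₁) (hx₂ : x₂ ∈ Q₂) (hy₂ : y₂ ∈ Q₂)
    (h : ({x₁, x₂} : Set X) = {y₁, y₂}) : x₁ = y₁ ∧ x₂ = y₂ := by
  have hp : ∀ a, a ∈ Q₁ → a ∈ Q₂ → a = p := fun a h1 h2 => by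
    have : a ∈ Q₁ ∩ Q₂ := ⟨h1, h2⟩
    rw [hinter] at this; exact this
  have h1 : x₁ = y₁ ∨ x₁ = y₂ := by
    have : x₁ ∈ ({y₁, y₂} : Set X) := h ▸ (by simp)
    simpa using this
  have h2 : x₂ = y₁ ∨ x₂ = y₂ := by
    have : x₂ ∈ ({y₁, y₂} : Set X) := h ▸ (by simp)
    simpa using this
  have h3 : y₁ = x₁ ∨ y₁ = x₂ := by
    have : y₁ ∈ ({x₁, x₂} : Set X) := h.symm ▸ (by simp)
    simpa using this
  have h4 : y₂ = x₁ ∨ y₂ = x₂ := by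
    have : y₂ ∈ ({x₁, x₂} : Set X) := h.symm ▸ (by simp)
    simpa using this
  constructor
  · rcases h1 with h'|h'
    · exact h'
    · have e1 : x₁ = p := hp x₁ hx₁ (by rw [h']; exact hy₂)
      rcases h3 with h''|h''
      · exact h''.symm
      · have e2 : y₁ = p := hp y₁ hy₁ (by rw [h'']; exact hx₂)
        rw [e1, e2]
  · rcases h2 with h'|h'
    · have e1 : x₂ = p := hp x₂ (by rw [h']; exact hy₁) hx₂
      rcases h4 with h''|h''
      · have e2 : y₂ = p := hp y₂ (by rw [h'']; exact hx₁) hy₂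
        rw [e1, e2]
      · exact h''.symm
    · exact h'

theorem stmt8 {X : Type*} [MetricSpace X] (Q₁ Q₂ : Set X) (p : X)
    (hQ₁ : Nonempty (Q₁ ≃ₜ (ℕ → I))) (hQ₂ : Nonempty (Q₂ ≃ₜ (ℕ → I)))
    (hunion : Q₁ ∪ Q₂ = Set.univ) (hinter : Q₁ ∩ Q₂ = {p}) :
    (∃ F : (Q₁ × Q₂) ≃ₜ {A : SymProd X 2 // ∃ x₁ ∈ Q₁, ∃ x₂ ∈ Q₂, (A.1 : Set X) = {x₁, x₂}},
        ∀ a : Q₁ × Q₂, (((F a : {A : SymProd X 2 // ∃ x₁ ∈ Q₁, ∃ x₂ ∈ Q₂,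
          (A.1 : Set X) = {x₁, x₂}}) : SymProd X 2).1 : Set X) = {(a.1 : X), (a.2 : X)}) ∧
    Nonempty ({A : SymProd X 2 // ∃ x₁ ∈ Q₁, ∃ x₂ ∈ Q₂, (A.1 : Set X) = {x₁, x₂}}
      ≃ₜ (ℕ → I)) := by
  classical
  have c1 : CompactSpace Q₁ := hQ₁.some.symm.compactSpace
  have c2 : CompactSpace Q₂ := hQ₂.some.symm.compactSpace
  let g : Q₁ × Q₂ → {A : SymProd X 2 // ∃ x₁ ∈ Q₁, ∃ x₂ ∈ Q₂, (A.1 : Set X) = {x₁, x₂}} :=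
    fun a => ⟨⟨pairNC (a.1 : X) (a.2 : X),
      by rw [pairNC_coe]; exact (Set.finite_singleton _).insert _,
      by rw [pairNC_coe]; exact (Set.ncard_insert_le _ _).trans (by simp)⟩,
      ⟨a.1, a.1.2, a.2, a.2.2, rfl⟩⟩
  have hcont : Continuous g := by
    refine Continuous.subtype_mk (Continuous.subtype_mk ?_ _) _
    refine LipschitzWith.continuous (K := 1) (LipschitzWith.of_dist_le_mul fun a b => ?_)
    rw [NNReal.coe_one, one_mul, Prod.dist_eq, Subtype.dist_eq, Subtype.dist_eq]
    exact dist_pairNC_le _ _ _ _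
  have hinj : Function.Injective g := by
    rintro ⟨x₁, x₂⟩ ⟨y₁, y₂⟩ h
    have hset : ({(x₁ : X), (x₂ : X)} : Set X) = {(y₁ : X), (y₂ : X)} := by
      have := congrArg (fun k : {A : SymProd X 2 // ∃ x₁ ∈ Q₁, ∃ x₂ ∈ Q₂,
        (A.1 : Set X) = {x₁, x₂}} => ((k.1.1 : NonemptyCompacts X) : Set X)) h
      simpa [g, pairNC_coe] using this
    obtain ⟨e1, e2⟩ := pair_eq_pair hinter x₁.2 y₁.2 x₂.2 y₂.2 hset
    exact Prod.ext (Subtype.ext e1) (Subtype.ext e2)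
  have hsurj : Function.Surjective g := by
    rintro ⟨A, x₁, h1, x₂, h2, hA⟩
    refine ⟨(⟨x₁, h1⟩, ⟨x₂, h2⟩), ?_⟩
    refine Subtype.ext (Subtype.ext (NonemptyCompacts.ext ?_))
    rw [pairNC_coe, hA]
  let e : (Q₁ × Q₂) ≃ {A : SymProd X 2 // ∃ x₁ ∈ Q₁, ∃ x₂ ∈ Q₂, (A.1 : Set X) = {x₁, x₂}} :=
    Equiv.ofBijective g ⟨hinj, hsurj⟩
  let F := Continuous.homeoOfEquivCompactToT2 (f := e) hcont
  refine ⟨⟨F, fun a => ?_⟩, ⟨F.symm.trans ((hQ₁.some.prodCongr hQ₂.some).trans hilbertProd)⟩⟩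
  exact pairNC_coe _ _
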